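/- For a metric G satisfying the radial block decomposition G(x) = P(x̂) + P_⊥(x̂)G(x)P_⊥(x̂), the straight line γ(s) = sv is, for every v ∈ ℝ^d, the unique solution to the geodesic equation with γ(0) = 0 and γ'(0) = v. -/

import Mathlib

/-- The rank-one projection `P(x̂) = |x̂⟩⟨x̂|` as a matrix: entries `x_i x_j / |x|²`. -/
noncomputable def projMat (d : ℕ) (x : Fin d → ℝ) : Matrix (Fin d) (Fin d) ℝ :=
  Matrix.of fun i j => x i * x j / (∑ k, x k ^ 2)

/-- The geodesic equation `2 e_k·G(γ)γ'' = γ'·(∇G·e_k)γ' − 2 e_k·(∇G·γ')γ'` at time `s`. -/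
def IsGeodesicODE (d : ℕ) (G : (Fin d → ℝ) → Matrix (Fin d) (Fin d) ℝ)
    (γ γ' γ'' : ℝ → Fin d → ℝ) (s : ℝ) : Prop :=
  ∀ k : Fin d,
    2 * dotProduct (Pi.single k 1) ((G (γ s)).mulVec (γ'' s)) =
      (∑ i, ∑ j, γ' s i *
          fderiv ℝ (fun z => G z i j) (γ s) (Pi.single k 1) * γ' s j) -
      2 * ∑ j, fderiv ℝ (fun z => G z k j) (γ s) (γ' s) * γ' s j

open Matrix Set

section AuxLemmas

variable {d : ℕ} {G : (Fin d → ℝ) → Matrix (Fin d) (Fin d) ℝ}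

lemma aux_sq_sum_pos {x : Fin d → ℝ} (hx : x ≠ 0) : 0 < ∑ k, x k ^ 2 := by
  obtain ⟨i, hi⟩ := Function.ne_iff.mp hx
  exact Finset.sum_pos' (fun j _ => sq_nonneg _)
    ⟨i, Finset.mem_univ i, pow_pos (abs_pos.mpr hi) 2 |>.trans_eq (sq_abs _)⟩

lemma aux_projMat_mulVec (x : Fin d → ℝ) (hx : x ≠ 0) : (projMat d x) *ᵥ x = x := by
  funext i
  have hS : (∑ k, x k ^ 2) ≠ 0 := (aux_sq_sum_pos hx).ne'
  simp only [projMat, Matrix.mulVec, dotProduct, Matrix.of_apply]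
  rw [show (∑ j, (x i * x j / ∑ k, x k ^ 2) * x j) = (x i * ∑ j, (x j)^2) / ∑ k, x k ^ 2 by
    rw [Finset.mul_sum, Finset.sum_div]; congr 1; funext j; ring]
  rw [mul_div_assoc, div_self hS, mul_one]

lemma aux_G_mulVec_self
    (hdec : ∀ z : Fin d → ℝ, z ≠ 0 →
      G z = projMat d z + (1 - projMat d z) * G z * (1 - projMat d z)) :
    ∀ x, (G x) *ᵥ x = x := by
  intro x
  rcases eq_or_ne x 0 with rfl | hx
  · simp
  · rw [hdec x hx]
    rw [Matrix.add_mulVec]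
    rw [aux_projMat_mulVec x hx]
    have h1 : (1 - projMat d x) *ᵥ x = 0 := by
      rw [Matrix.sub_mulVec, Matrix.one_mulVec, aux_projMat_mulVec x hx, sub_self]
    rw [← Matrix.mulVec_mulVec, ← Matrix.mulVec_mulVec, h1, Matrix.mulVec_zero,
      Matrix.mulVec_zero, add_zero]

lemma aux_G_line (hGsm : ∀ i j, ContDiff ℝ 2 fun z => G z i j)
    (hGx : ∀ x, (G x) *ᵥ x = x) (v : Fin d → ℝ) (s : ℝ) :
    (G (s • v)) *ᵥ v = v := by
  have hcont : Continuous fun t : ℝ => (G (t • v)) *ᵥ v := by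
    apply continuous_pi; intro k
    simp only [Matrix.mulVec, dotProduct]
    exact continuous_finset_sum _ fun j _ =>
      (((hGsm k j).continuous).comp (continuous_id.smul continuous_const)).mul continuous_const
  have heq : EqOn (fun t : ℝ => (G (t • v)) *ᵥ v) (fun _ => v) {(0:ℝ)}ᶜ := by
    intro t ht
    have h := hGx (t • v)
    rw [Matrix.mulVec_smul] at h
    exact smul_right_injective _ (by simpa using ht) h
  have := Continuous.ext_on (dense_compl_singleton (0:ℝ)) hcont continuous_const heq
  exact congrFun this s

lemma aux_T2_zero (hGsm : ∀ i j, ContDiff ℝ 2 fun z => G z i j)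
    (hGx : ∀ x, (G x) *ᵥ x = x) (v : Fin d → ℝ) (s : ℝ) (k : Fin d) :
    ∑ j, fderiv ℝ (fun z => G z k j) (s • v) v * v j = 0 := by
  have hline : HasDerivAt (fun t : ℝ => t • v) v s := by
    simpa using (hasDerivAt_id s).smul_const v
  have h1 : HasDerivAt (fun t : ℝ => ∑ j, G (t • v) k j * v j)
      (∑ j, fderiv ℝ (fun z => G z k j) (s • v) v * v j) s := by
    apply HasDerivAt.fun_sum
    intro j _
    have hd : HasFDerivAt (fun z => G z k j) (fderiv ℝ (fun z => G z k j) (s • v)) (s • v) :=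
      (((hGsm k j).differentiable (by norm_num)) (s • v)).hasFDerivAt
    exact (hd.comp_hasDerivAt s hline).mul_const (v j)
  have h2 : (fun t : ℝ => ∑ j, G (t • v) k j * v j) = fun _ => v k := by
    funext t
    have := congrFun (aux_G_line hGsm hGx v t) k
    simpa [Matrix.mulVec, dotProduct] using this
  rw [h2] at h1
  exact h1.unique (hasDerivAt_const s (v k))

lemma aux_fderiv_identity (hGsm : ∀ i j, ContDiff ℝ 2 fun z => G z i j)
    (hGx : ∀ x, (G x) *ᵥ x = x) (x : Fin d → ℝ) (i k : Fin d) :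
    ∑ j, x j * fderiv ℝ (fun z => G z i j) x (Pi.single k 1) + G x i k
      = (Pi.single k 1 : Fin d → ℝ) i := by
  classical
  have hL : HasFDerivAt (fun z : Fin d → ℝ => ∑ j, G z i j * z j)
      (∑ j, (x j • fderiv ℝ (fun z => G z i j) x + G x i j • ContinuousLinearMap.proj j)) x := by
    apply HasFDerivAt.fun_sum
    intro j _
    have hd : HasFDerivAt (fun z => G z i j) (fderiv ℝ (fun z => G z i j) x) x :=
      (((hGsm i j).differentiable (by norm_num)) x).hasFDerivAt
    have hp : HasFDerivAt (fun z : Fin d → ℝ => z j)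
        (ContinuousLinearMap.proj j : (Fin d → ℝ) →L[ℝ] ℝ) x := by
      exact (ContinuousLinearMap.proj j : (Fin d → ℝ) →L[ℝ] ℝ).hasFDerivAt
    simpa [add_comm] using hd.fun_mul hp
  have h2 : (fun z : Fin d → ℝ => ∑ j, G z i j * z j) = fun z => z i := by
    funext z
    have := congrFun (hGx z) i
    simpa [Matrix.mulVec, dotProduct] using this
  rw [h2] at hL
  have hR : HasFDerivAt (fun z : Fin d → ℝ => z i)
      (ContinuousLinearMap.proj i : (Fin d → ℝ) →L[ℝ] ℝ) x := by
    exact (ContinuousLinearMap.proj i : (Fin d → ℝ) →L[ℝ] ℝ).hasFDerivAt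
  have := hL.unique hR
  have happ := congrArg (fun L : (Fin d → ℝ) →L[ℝ] ℝ => L (Pi.single k 1)) this
  simp only [ContinuousLinearMap.sum_apply, ContinuousLinearMap.add_apply,
    ContinuousLinearMap.smul_apply, ContinuousLinearMap.proj_apply, smul_eq_mul] at happ
  rw [← happ]
  rw [Finset.sum_add_distrib]
  congr 1
  rw [Finset.sum_eq_single k]
  · simp
  · intro b _ hb; simp [Pi.single_apply, hb]
  · simp

lemma aux_T1_zero (hGsm : ∀ i j, ContDiff ℝ 2 fun z => G z i j)
    (hGsymm : ∀ z, (G z).IsSymm)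
    (hGx : ∀ x, (G x) *ᵥ x = x) (v : Fin d → ℝ) (s : ℝ) (k : Fin d) :
    ∑ i, ∑ j, v i * fderiv ℝ (fun z => G z i j) (s • v) (Pi.single k 1) * v j = 0 := by
  set F : ℝ → ℝ := fun t =>
    ∑ i, ∑ j, v i * fderiv ℝ (fun z => G z i j) (t • v) (Pi.single k 1) * v j with hF
  have hcont : Continuous F := by
    apply continuous_finset_sum; intro i _
    apply continuous_finset_sum; intro j _
    have h1 : Continuous fun t : ℝ => fderiv ℝ (fun z => G z i j) (t • v) :=
      ((hGsm i j).continuous_fderiv (by norm_num)).comp (continuous_id.smul continuous_const)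
    exact (continuous_const.mul (h1.clm_apply continuous_const)).mul continuous_const
  have hzero : EqOn F (fun _ => 0) {(0:ℝ)}ᶜ := by
    intro t ht
    have ht0 : t ≠ 0 := by simpa using ht
    have key : t * F t = 0 := by
      have h1 : t * F t = ∑ i, v i * (∑ j, (t • v) j *
          fderiv ℝ (fun z => G z i j) (t • v) (Pi.single k 1)) := by
        rw [hF, Finset.mul_sum]
        congr 1; funext i
        rw [Finset.mul_sum, Finset.mul_sum]
        congr 1; funext j
        simp only [Pi.smul_apply, smul_eq_mul]; ring
      rw [h1]
      have h2 : ∀ i, (∑ j, (t • v) j * fderiv ℝ (fun z => G z i j) (t • v) (Pi.single k 1))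
          = (Pi.single k 1 : Fin d → ℝ) i - G (t • v) i k := by
        intro i
        have := aux_fderiv_identity hGsm hGx (t • v) i k
        linarith
      simp only [h2]
      have h3 : ∑ i, v i * ((Pi.single k 1 : Fin d → ℝ) i - G (t • v) i k)
          = v k - ∑ i, G (t • v) k i * v i := by
        simp only [mul_sub]
        rw [Finset.sum_sub_distrib]
        congr 1
        · rw [Finset.sum_eq_single k]
          · simp
          · intro b _ hb; simp [Pi.single_apply, hb]
          · simp
        · congr 1; funext i
          rw [(hGsymm (t • v)).apply i k, mul_comm]
      rw [h3]
      have h4 : ∑ i, G (t • v) k i * v i = v k := by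
        have := congrFun (aux_G_line hGsm hGx v t) k
        simpa [Matrix.mulVec, dotProduct] using this
      rw [h4, sub_self]
    exact (mul_eq_zero.mp key).resolve_left ht0
  have := Continuous.ext_on (dense_compl_singleton (0:ℝ)) hcont continuous_const hzero
  exact congrFun this s

lemma aux_contDiff_det {E : Type*} [NormedAddCommGroup E] [NormedSpace ℝ E]
    {n : ℕ∞} {M : E → Matrix (Fin d) (Fin d) ℝ}
    (h : ∀ i j, ContDiff ℝ n fun x => M x i j) :
    ContDiff ℝ n fun x => (M x).det := by
  have : (fun x => (M x).det) = fun x =>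
      ∑ σ : Equiv.Perm (Fin d), ((Equiv.Perm.sign σ : ℤ) : ℝ) * ∏ i, M x (σ i) i := by
    funext x
    rw [Matrix.det_apply]
    congr 1; funext σ
    simp [Units.smul_def, zsmul_eq_mul]
  rw [this]
  apply ContDiff.sum; intro σ _
  exact contDiff_const.mul (contDiff_prod (fun i _ => h (σ i) i))

lemma aux_contDiff_inv_entries {E : Type*} [NormedAddCommGroup E] [NormedSpace ℝ E]
    {n : ℕ∞} {M : E → Matrix (Fin d) (Fin d) ℝ}
    (h : ∀ i j, ContDiff ℝ n fun x => M x i j)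
    (hdet : ∀ x, (M x).det ≠ 0) (i j : Fin d) :
    ContDiff ℝ n fun x => (M x)⁻¹ i j := by
  have hinv : (fun x => (M x)⁻¹ i j)
      = fun x => ((M x).det)⁻¹ * (M x).adjugate i j := by
    funext x
    rw [Matrix.inv_def, Ring.inverse_eq_inv']
    simp [Matrix.smul_apply, smul_eq_mul]
  rw [hinv]
  have hadj : ContDiff ℝ n fun x => (M x).adjugate i j := by
    have : (fun x => (M x).adjugate i j)
        = fun x => ((M x).updateRow j (Pi.single i 1)).det := by
      funext x; rw [Matrix.adjugate_apply]
    rw [this]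
    apply aux_contDiff_det
    intro a c
    rcases eq_or_ne a j with rfl | haj
    · simp only [Matrix.updateRow_apply, if_pos rfl]
      exact contDiff_const
    · simp only [Matrix.updateRow_apply, if_neg haj]
      exact h a c
  have hdinv : ContDiff ℝ n fun x => ((M x).det)⁻¹ := by
    rw [contDiff_iff_contDiffAt]
    intro x
    exact ((aux_contDiff_det h).contDiffAt).inv (hdet x)
  exact hdinv.mul hadj

lemma aux_det_ne_zero {a b : ℝ} (ha : 0 < a)
    (hell : ∀ z y : Fin d → ℝ,
      a * ∑ i, y i ^ 2 ≤ dotProduct y ((G z).mulVec y) ∧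
      dotProduct y ((G z).mulVec y) ≤ b * ∑ i, y i ^ 2) (z : Fin d → ℝ) :
    (G z).det ≠ 0 := by
  intro h
  obtain ⟨y, hy0, hyv⟩ := (Matrix.exists_mulVec_eq_zero_iff).mpr h
  have h1 := (hell z y).1
  rw [hyv, dotProduct_zero] at h1
  nlinarith [aux_sq_sum_pos hy0]

end AuxLemmas

/-- The geodesic right-hand side as a vector. -/
noncomputable def geoR (d : ℕ) (G : (Fin d → ℝ) → Matrix (Fin d) (Fin d) ℝ)
    (x w : Fin d → ℝ) : Fin d → ℝ := fun k =>
  (∑ i, ∑ j, w i * fderiv ℝ (fun z => G z i j) x (Pi.single k 1) * w j) / 2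
    - ∑ j, fderiv ℝ (fun z => G z k j) x w * w j

/-- The first-order vector field equivalent to the geodesic ODE. -/
noncomputable def geoF (d : ℕ) (G : (Fin d → ℝ) → Matrix (Fin d) (Fin d) ℝ) :
    (Fin d → ℝ) × (Fin d → ℝ) → (Fin d → ℝ) × (Fin d → ℝ) :=
  fun p => (p.2, ((G p.1)⁻¹) *ᵥ geoR d G p.1 p.2)

lemma aux_contDiff_geoF {d : ℕ} {G : (Fin d → ℝ) → Matrix (Fin d) (Fin d) ℝ}
    (hGsm : ∀ i j, ContDiff ℝ 2 fun z => G z i j)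
    (hdet : ∀ x, (G x).det ≠ 0) :
    ContDiff ℝ 1 (geoF d G) := by
  apply ContDiff.prodMk contDiff_snd
  rw [contDiff_pi]
  intro k
  have hw : ∀ i : Fin d, ContDiff ℝ (1:ℕ∞)
      (fun p : (Fin d → ℝ) × (Fin d → ℝ) => p.2 i) := fun i =>
    (ContinuousLinearMap.proj i : (Fin d → ℝ) →L[ℝ] ℝ).contDiff.comp contDiff_snd
  have hD : ∀ i j, ContDiff ℝ (1:ℕ∞)
      fun p : (Fin d → ℝ) × (Fin d → ℝ) => fderiv ℝ (fun z => G z i j) p.1 :=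
    fun i j => ((hGsm i j).fderiv_right (by norm_num)).comp contDiff_fst
  have hR : ∀ m : Fin d, ContDiff ℝ (1:ℕ∞)
      fun p : (Fin d → ℝ) × (Fin d → ℝ) => geoR d G p.1 p.2 m := by
    intro m
    apply ContDiff.sub
    · apply ContDiff.div_const
      apply ContDiff.sum; intro i _
      apply ContDiff.sum; intro j _
      exact (((hw i).mul ((hD i j).clm_apply contDiff_const))).mul (hw j)
    · apply ContDiff.sum; intro j _
      exact ((hD m j).clm_apply contDiff_snd).mul (hw j)
  have : (fun p : (Fin d → ℝ) × (Fin d → ℝ) => (((G p.1)⁻¹) *ᵥ geoR d G p.1 p.2) k)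
      = fun p => ∑ j, (G p.1)⁻¹ k j * geoR d G p.1 p.2 j := by
    funext p; simp [Matrix.mulVec, dotProduct]
  rw [this]
  apply ContDiff.sum; intro j _
  exact ((aux_contDiff_inv_entries (n := 1)
    (fun i j => (hGsm i j).of_le (by norm_num)) hdet k j).comp contDiff_fst).mul (hR j)

/-- For a metric with the radial block decomposition, the straight line `γ(s) = s v` is,
for every `v`, the unique solution to the geodesic equation with `γ(0) = 0`, `γ'(0) = v`. -/
theorem stmt_12 (d : ℕ) (hd : 2 ≤ d) (a b C : ℝ) (ha : 0 < a) (hb : 0 < b) (hC : 0 < C)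
    (G : (Fin d → ℝ) → Matrix (Fin d) (Fin d) ℝ)
    (hGsm : ∀ i j, ContDiff ℝ 2 fun z => G z i j)
    (hGsymm : ∀ z, (G z).IsSymm)
    (hell : ∀ z y : Fin d → ℝ,
      a * ∑ i, y i ^ 2 ≤ dotProduct y ((G z).mulVec y) ∧
      dotProduct y ((G z).mulVec y) ≤ b * ∑ i, y i ^ 2)
    (hbd : ∀ z : Fin d → ℝ, ∀ i j, |G z i j| ≤ C ∧
      ‖fderiv ℝ (fun w => G w i j) z‖ ≤ C / (1 + ‖z‖))
    (hdec : ∀ z : Fin d → ℝ, z ≠ 0 →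
      G z = projMat d z + (1 - projMat d z) * G z * (1 - projMat d z)) :
    (∀ v : Fin d → ℝ, ∀ s : ℝ,
      IsGeodesicODE d G (fun t => t • v) (fun _ => v) (fun _ => 0) s) ∧
    (∀ v : Fin d → ℝ, ∀ γ γ' γ'' : ℝ → Fin d → ℝ,
      γ 0 = 0 → γ' 0 = v →
      (∀ s ∈ Set.Icc (0:ℝ) 1, HasDerivAt γ (γ' s) s) →
      (∀ s ∈ Set.Icc (0:ℝ) 1, HasDerivAt γ' (γ'' s) s) →
      (∀ s ∈ Set.Icc (0:ℝ) 1, IsGeodesicODE d G γ γ' γ'' s) →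
      ∀ s ∈ Set.Icc (0:ℝ) 1, γ s = s • v) := by
  have hGx : ∀ x, (G x) *ᵥ x = x := aux_G_mulVec_self hdec
  have hline : ∀ (v : Fin d → ℝ) (s : ℝ),
      IsGeodesicODE d G (fun t => t • v) (fun _ => v) (fun _ => 0) s := by
    intro v s
    intro k
    have hT1 := aux_T1_zero hGsm hGsymm hGx v s k
    have hT2 := aux_T2_zero hGsm hGx v s k
    simp only [Matrix.mulVec_zero, dotProduct_zero, mul_zero]
    rw [hT1, hT2]
    ring
  refine ⟨hline, ?_⟩
  intro v γ γ' γ'' hγ0 hγ'0 hdγ hdγ' hode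
  have hdet : ∀ z, (G z).det ≠ 0 := aux_det_ne_zero ha hell
  have hcd : ContDiff ℝ 1 (geoF d G) := aux_contDiff_geoF hGsm hdet
  have hgeoRline : ∀ (t : ℝ), geoR d G (t • v) v = 0 := by
    intro t
    funext k
    simp only [geoR]
    rw [aux_T1_zero hGsm hGsymm hGx v t k, aux_T2_zero hGsm hGx v t k]
    norm_num
  have hΦ : ∀ t ∈ Set.Icc (0:ℝ) 1, γ'' t = ((G (γ t))⁻¹) *ᵥ geoR d G (γ t) (γ' t) := by
    intro t ht
    have hkey : (G (γ t)) *ᵥ γ'' t = geoR d G (γ t) (γ' t) := by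
      funext k
      have h := hode t ht k
      rw [single_dotProduct, one_mul] at h
      simp only [geoR]
      linarith
    rw [← hkey, Matrix.mulVec_mulVec,
      Matrix.nonsing_inv_mul _ (isUnit_iff_ne_zero.mpr (hdet _)), Matrix.one_mulVec]
  set f : ℝ → (Fin d → ℝ) × (Fin d → ℝ) := fun t => (γ t, γ' t) with hf
  set g : ℝ → (Fin d → ℝ) × (Fin d → ℝ) := fun t => (t • v, v) with hg
  have hfc : ContinuousOn f (Set.Icc (0:ℝ) 1) :=
    ContinuousOn.prodMk (fun t ht => (hdγ t ht).continuousAt.continuousWithinAt)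
      (fun t ht => (hdγ' t ht).continuousAt.continuousWithinAt)
  have hgc : Continuous g := (continuous_id.smul continuous_const).prodMk continuous_const
  have hcpt : IsCompact (f '' Set.Icc (0:ℝ) 1 ∪ g '' Set.Icc (0:ℝ) 1) :=
    (isCompact_Icc.image_of_continuousOn hfc).union
      (isCompact_Icc.image_of_continuousOn hgc.continuousOn)
  obtain ⟨r, hr⟩ := hcpt.isBounded.subset_closedBall 0
  obtain ⟨K, hK⟩ := (isCompact_closedBall (0 : (Fin d → ℝ) × (Fin d → ℝ)) r
    ).exists_bound_of_continuousOn (hcd.continuous_fderiv (by norm_num)).continuousOn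
  have hlip : LipschitzOnWith K.toNNReal (geoF d G)
      (Metric.closedBall (0 : (Fin d → ℝ) × (Fin d → ℝ)) r) := by
    apply Convex.lipschitzOnWith_of_nnnorm_fderiv_le
      (fun x _ => (hcd.differentiable (by norm_num)) x) _ (convex_closedBall _ _)
    intro x hx
    rw [← norm_toNNReal]
    exact Real.toNNReal_mono (hK x hx)
  have hfd : ∀ t ∈ Set.Ico (0:ℝ) 1, HasDerivWithinAt f (geoF d G (f t)) (Set.Ici t) t := by
    intro t ht
    have ht' := Set.Ico_subset_Icc_self ht
    have h1 : HasDerivAt f (γ' t, γ'' t) t := (hdγ t ht').prodMk (hdγ' t ht')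
    have h2 : geoF d G (f t) = (γ' t, γ'' t) := by
      rw [geoF]; exact Prod.ext rfl (hΦ t ht').symm
    rw [h2]; exact h1.hasDerivWithinAt
  have hgd : ∀ t ∈ Set.Ico (0:ℝ) 1, HasDerivWithinAt g (geoF d G (g t)) (Set.Ici t) t := by
    intro t ht
    have h1 : HasDerivAt g (v, 0) t := by
      refine HasDerivAt.prodMk ?_ (hasDerivAt_const t v)
      simpa using (hasDerivAt_id t).smul_const v
    have h2 : geoF d G (g t) = (v, (0 : Fin d → ℝ)) := by
      rw [geoF]
      refine Prod.ext rfl ?_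
      show ((G (t • v))⁻¹) *ᵥ geoR d G (t • v) v = 0
      rw [hgeoRline t, Matrix.mulVec_zero]
    rw [h2]; exact h1.hasDerivWithinAt
  have hmemf : ∀ t ∈ Set.Ico (0:ℝ) 1, f t ∈ Metric.closedBall
      (0 : (Fin d → ℝ) × (Fin d → ℝ)) r :=
    fun t ht => hr (Set.mem_union_left _ (Set.mem_image_of_mem f (Set.Ico_subset_Icc_self ht)))
  have hmemg : ∀ t ∈ Set.Ico (0:ℝ) 1, g t ∈ Metric.closedBall
      (0 : (Fin d → ℝ) × (Fin d → ℝ)) r :=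
    fun t ht => hr (Set.mem_union_right _ (Set.mem_image_of_mem g (Set.Ico_subset_Icc_self ht)))
  have h0 : f 0 = g 0 := by
    rw [hf, hg]
    exact Prod.ext (by simp [hγ0]) (by simp [hγ'0])
  have huniq := ODE_solution_unique_of_mem_Icc_right (fun _ _ => hlip) hfc hfd hmemf
    (hgc.continuousOn) hgd hmemg h0
  intro s hs
  exact congrArg Prod.fst (huniq hs)
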